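/- (Rule 4) Let T be a finite tree on vertex set V, let S be a total [1,2]-set of T, and let u ∈ V \ S be a vertex with exactly two neighbors in S. Form the graph T₄ on V ⊕ Fin 3 by keeping all edges of T (on the left summand) and adding the path u–v–w–x, where v = inr 0, w = inr 1 and x = inr 2 are new vertices (i.e. add edges {inl u, inr 0}, {inr 0, inr 1} and {inr 1, inr 2}). Then T₄ is a tree and (inl '' S) ∪ {w, x} is a total [1,2]-set of T₄. -/

import Mathlib

/-- `S` is a total `[1,2]`-set of `G`: every vertex of `G` (whether in `S` or
not) has at least one and at most two neighbors in `S`. -/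
def IsTotalOneTwoSet {V : Type*} (G : SimpleGraph V) (S : Set V) : Prop :=
  ∀ v : V, 1 ≤ (G.neighborSet v ∩ S).ncard ∧ (G.neighborSet v ∩ S).ncard ≤ 2

/-- The graph obtained from `T` by attaching a new path `u – inr 0 – inr 1 – inr 2`
of three new vertices at `u`. -/
def addPath3 {V : Type*} (T : SimpleGraph V) (u : V) : SimpleGraph (V ⊕ Fin 3) :=
  T.map Sum.inl ⊔
    SimpleGraph.fromEdgeSet
      {s(Sum.inl u, Sum.inr 0), s(Sum.inr 0, Sum.inr 1), s(Sum.inr 1, Sum.inr 2)}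

section Helpers
open SimpleGraph Sum Walk

lemma addPath3_adj {V : Type*} (T : SimpleGraph V) (u : V) (x y : V ⊕ Fin 3) :
    (addPath3 T u).Adj x y ↔ (∃ a b, T.Adj a b ∧ x = inl a ∧ y = inl b) ∨
      (x = inl u ∧ y = inr 0) ∨ (x = inr 0 ∧ y = inl u) ∨
      (x = inr 0 ∧ y = inr 1) ∨ (x = inr 1 ∧ y = inr 0) ∨
      (x = inr 1 ∧ y = inr 2) ∨ (x = inr 2 ∧ y = inr 1) := by
  simp only [addPath3, sup_adj, SimpleGraph.map_adj', fromEdgeSet_adj, Set.mem_insert_iff,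
    Set.mem_singleton_iff, Sym2.eq_iff, Function.Embedding.coeFn_mk]
  constructor
  · rintro (⟨-, a, b, h, rfl, rfl⟩ | ⟨(⟨rfl,rfl⟩|⟨rfl,rfl⟩)|(⟨rfl,rfl⟩|⟨rfl,rfl⟩)|(⟨rfl,rfl⟩|⟨rfl,rfl⟩), hne⟩)
    · exact Or.inl ⟨a, b, h, rfl, rfl⟩
    all_goals simp_all
  · rintro (⟨a, b, h, rfl, rfl⟩ | ⟨rfl,rfl⟩ | ⟨rfl,rfl⟩ | ⟨rfl,rfl⟩ | ⟨rfl,rfl⟩ | ⟨rfl,rfl⟩ | ⟨rfl,rfl⟩)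
    · exact Or.inl ⟨by simpa using h.ne, a, b, h, rfl, rfl⟩
    all_goals simp


-- two distinct neighbors of the start of a cycle, inside the support
lemma cycle_start_two_neighbors {V : Type*} {G : SimpleGraph V} {v : V}
    {c : G.Walk v v} (hc : c.IsCycle) :
    ∃ x y, x ≠ y ∧ G.Adj v x ∧ G.Adj v y ∧ x ∈ c.support ∧ y ∈ c.support := by
  cases c with
  | nil => exact absurd rfl hc.ne_nil
  | cons h p =>
    rename_i w
    rw [Walk.cons_isCycle_iff] at hc
    have hwv : w ≠ v := fun e => by subst e; exact G.irrefl h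
    obtain ⟨y, h', q, hq⟩ := Walk.exists_eq_cons_of_ne (G.ne_of_adj h) p.reverse
    have hyp : s(v, y) ∈ p.edges := by
      have : s(v, y) ∈ p.reverse.edges := by rw [hq]; simp
      simpa using this
    have hxy : w ≠ y := by
      rintro rfl; exact hc.2 hyp
    refine ⟨w, y, hxy, h, h', ?_, ?_⟩
    · simp
    · have : y ∈ p.reverse.support := by rw [hq]; simp
      simp at this
      simp [this]

lemma closed_mem_support_tail {V : Type*} {G : SimpleGraph V} {v x : V}
    {c : G.Walk v v} (hc : ¬ c.Nil) (hx : x ∈ c.support) : x ∈ c.support.tail := by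
  cases c with
  | nil => simp at hc
  | cons h p =>
    simp only [Walk.support_cons, List.tail_cons]
    simp only [Walk.support_cons, List.mem_cons] at hx
    rcases hx with rfl | hx
    · exact p.end_mem_support
    · exact hx

lemma cycle_two_neighbors {V : Type*} {G : SimpleGraph V} {a v : V}
    {c : G.Walk a a} (hc : c.IsCycle) (hv : v ∈ c.support) :
    ∃ x y, x ≠ y ∧ G.Adj v x ∧ G.Adj v y ∧ x ∈ c.support ∧ y ∈ c.support := by
  classical
  obtain ⟨x, y, hxy, hax, hay, hxs, hys⟩ := cycle_start_two_neighbors (hc.rotate hv)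
  have hrot := Walk.support_rotate c _ hv
  have hmem : ∀ z, z ∈ (c.rotate _ hv).support → z ∈ c.support := by
    intro z hz
    have hz' := closed_mem_support_tail (hc.rotate hv).not_nil hz
    have := hrot.mem_iff.mp hz'
    exact List.mem_of_mem_tail this
  exact ⟨x, y, hxy, hax, hay, hmem _ hxs, hmem _ hys⟩

/-- hom from `T` to `T.map f` -/
def mapHom {V W : Type*} (T : SimpleGraph V) (f : V ↪ W) : T →g T.map f :=
  ⟨f, fun h => (map_adj f T _ _).mpr ⟨_, _, h, rfl, rfl⟩⟩

lemma lift_walk {V W : Type*} {T : SimpleGraph V} {f : V ↪ W} :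
    ∀ {a b : W} (p : (T.map f).Walk a b) {x y : V} (hx : f x = a) (hy : f y = b),
      ∃ q : T.Walk x y, p = (q.map (mapHom T f)).copy hx hy := by
  intro a b p
  induction p with
  | nil =>
    intro x y hx hy
    have : x = y := f.injective (hx.trans hy.symm)
    subst this
    subst hx
    exact ⟨Walk.nil, rfl⟩
  | cons h p ih =>
    rename_i c d e
    intro x y hx hy
    obtain ⟨-, a', c', hadj, ha, hc⟩ := h
    have hax : a' = x := f.injective (by rw [ha, hx])
    subst hax
    obtain ⟨q, hq⟩ := ih (x := c') (y := y) hc hy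
    refine ⟨Walk.cons hadj q, ?_⟩
    subst hx hy hc
    rw [hq]
    simp [Walk.map_cons, mapHom]

lemma isAcyclic_map {V W : Type*} {T : SimpleGraph V} (f : V ↪ W)
    (hT : T.IsAcyclic) : (T.map f).IsAcyclic := by
  intro a c hc
  -- the start vertex is in the image of f
  have hne : ¬ c.Nil := hc.not_nil
  have hadj := Walk.adj_snd (p := c) hne
  obtain ⟨_, x, y, _, hx, _⟩ := hadj
  obtain ⟨q, hq⟩ := lift_walk c hx hx
  rw [hq] at hc
  subst hx
  have := (Walk.map_isCycle_iff_of_injective (p := q)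
    (f := mapHom T f) f.injective).mp hc
  exact hT q this

end Helpers

open SimpleGraph Sum Walk in
theorem rule4_addPath3_totalOneTwoSet {V : Type*} [Fintype V]
    (T : SimpleGraph V) (hT : T.IsTree)
    (S : Set V) (hS : IsTotalOneTwoSet T S)
    (u : V) (huS : u ∉ S) (htwo : (T.neighborSet u ∩ S).ncard = 2) :
    (addPath3 T u).IsTree ∧
    IsTotalOneTwoSet (addPath3 T u)
      (Sum.inl '' S ∪ {Sum.inr 1, Sum.inr 2}) := by
  constructor
  ·
    set f : V ↪ (V ⊕ Fin 3) := ⟨Sum.inl, Sum.inl_injective⟩ with hf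
    constructor
    · -- connected
      rw [connected_iff]
      refine ⟨?_, ⟨inl u⟩⟩
      have key : ∀ z, (addPath3 T u).Reachable z (inl u) := by
        have h01 : (addPath3 T u).Adj (inr 0) (inl u) := by rw [addPath3_adj]; tauto
        have h12 : (addPath3 T u).Adj (inr 1) (inr 0) := by rw [addPath3_adj]; tauto
        have h23 : (addPath3 T u).Adj (inr 2) (inr 1) := by rw [addPath3_adj]; tauto
        rintro (a | i)
        · have hr : T.Reachable a u := hT.isConnected.preconnected a u
          exact Reachable.map
            (⟨inl, fun h => by rw [addPath3_adj]; exact Or.inl ⟨_, _, h, rfl, rfl⟩⟩ :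
              T →g addPath3 T u) hr
        · fin_cases i
          · exact h01.reachable
          · exact (h12.reachable).trans h01.reachable
          · exact (h23.reachable).trans ((h12.reachable).trans h01.reachable)
      intro x y
      exact (key x).trans (key y).symm
    · -- acyclic
      intro a c hc
      have hn2 : inr 2 ∉ c.support := by
        intro hv
        obtain ⟨x, y, hxy, hax, hay, _, _⟩ := cycle_two_neighbors hc hv
        rw [addPath3_adj] at hax hay
        have hx1 : x = inr 1 := by rcases hax with ⟨a,b,_,h,_⟩|h|h|h|h|h|h <;> simp_all
        have hy1 : y = inr 1 := by rcases hay with ⟨a,b,_,h,_⟩|h|h|h|h|h|h <;> simp_all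
        exact hxy (hx1.trans hy1.symm)
      have hn1 : inr 1 ∉ c.support := by
        intro hv
        obtain ⟨x, y, hxy, hax, hay, hxs, hys⟩ := cycle_two_neighbors hc hv
        rw [addPath3_adj] at hax hay
        have hx : x = inr 0 ∨ x = inr 2 := by
          rcases hax with ⟨a,b,_,h,_⟩|h|h|h|h|h|h <;> simp_all
        have hy : y = inr 0 ∨ y = inr 2 := by
          rcases hay with ⟨a,b,_,h,_⟩|h|h|h|h|h|h <;> simp_all
        rcases hx with rfl | rfl <;> rcases hy with rfl | rfl
        · exact hxy rfl
        · exact hn2 hys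
        · exact hn2 hxs
        · exact hxy rfl
      have hn0 : inr 0 ∉ c.support := by
        intro hv
        obtain ⟨x, y, hxy, hax, hay, hxs, hys⟩ := cycle_two_neighbors hc hv
        rw [addPath3_adj] at hax hay
        have hx : x = inl u ∨ x = inr 1 := by
          rcases hax with ⟨a,b,_,h,_⟩|h|h|h|h|h|h <;> simp_all
        have hy : y = inl u ∨ y = inr 1 := by
          rcases hay with ⟨a,b,_,h,_⟩|h|h|h|h|h|h <;> simp_all
        rcases hx with rfl | rfl <;> rcases hy with rfl | rfl
        · exact hxy rfl
        · exact hn1 hys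
        · exact hn1 hxs
        · exact hxy rfl
      have hinl : ∀ z ∈ c.support, ∃ a, z = inl a := by
        rintro (a | i) hz
        · exact ⟨a, rfl⟩
        · exfalso; fin_cases i
          · exact hn0 hz
          · exact hn1 hz
          · exact hn2 hz
      have hedges : ∀ e ∈ c.edges, e ∈ (T.map f).edgeSet := by
        intro e
        refine Sym2.ind (fun x y he => ?_) e
        have hxs := Walk.fst_mem_support_of_mem_edges c he
        have hys := Walk.snd_mem_support_of_mem_edges c he
        obtain ⟨a, rfl⟩ := hinl x hxs
        obtain ⟨b, rfl⟩ := hinl y hys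
        have hadj := Walk.adj_of_mem_edges c he
        rw [addPath3_adj] at hadj
        have : T.Adj a b := by
          rcases hadj with ⟨a',b',h,h1,h2⟩|h|h|h|h|h|h <;> simp_all
        exact (map_adj f T _ _).mpr ⟨a, b, this, rfl, rfl⟩
      exact isAcyclic_map f hT.IsAcyclic (c.transfer _ hedges) (hc.transfer hedges)
  ·
    set S' : Set (V ⊕ Fin 3) := Sum.inl '' S ∪ {Sum.inr 1, Sum.inr 2} with hS'
    rintro (a | i)
    · -- left vertices
      have key : (addPath3 T u).neighborSet (inl a) ∩ S' = inl '' (T.neighborSet a ∩ S) := by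
        ext z
        simp only [Set.mem_inter_iff, mem_neighborSet, addPath3_adj, hS', Set.mem_union,
          Set.mem_image, Set.mem_insert_iff, Set.mem_singleton_iff]
        constructor
        · rintro ⟨⟨a',b,h,ha,rfl⟩|⟨ha,rfl⟩|⟨h,rfl⟩|⟨h,_⟩|⟨h,_⟩|⟨h,_⟩|⟨h,_⟩, hz⟩
          · rcases hz with ⟨s, hsS, hs⟩ | h1 | h2
            · obtain rfl : a' = a := inl_injective ha.symm
              exact ⟨b, ⟨h, by obtain rfl : s = b := inl_injective hs; exact hsS⟩, rfl⟩
            · exact absurd h1 (by simp)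
            · exact absurd h2 (by simp)
          · simp_all
          · simp_all
          · simp_all
          · simp_all
          · simp_all
          · simp_all
        · rintro ⟨b, ⟨hb, hbS⟩, rfl⟩
          exact ⟨Or.inl ⟨a, b, hb, rfl, rfl⟩, Or.inl ⟨b, hbS, rfl⟩⟩
      rw [key, Set.ncard_image_of_injective _ inl_injective]
      exact hS a
    · fin_cases i
      · show 1 ≤ ((addPath3 T u).neighborSet (inr 0) ∩ S').ncard ∧
          ((addPath3 T u).neighborSet (inr 0) ∩ S').ncard ≤ 2
        have key : (addPath3 T u).neighborSet (inr 0) ∩ S' = {inr 1} := by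
          ext z
          simp only [Set.mem_inter_iff, mem_neighborSet, addPath3_adj, hS', Set.mem_union,
            Set.mem_image, Set.mem_insert_iff, Set.mem_singleton_iff]
          constructor
          · rintro ⟨⟨a',b,h,ha,rfl⟩|⟨ha,rfl⟩|⟨h,rfl⟩|⟨h,rfl⟩|⟨h,_⟩|⟨h,_⟩|⟨h,_⟩, hz⟩ <;> simp_all
          · rintro rfl
            exact ⟨by tauto, by tauto⟩
        rw [key, Set.ncard_singleton]; omega
      · show 1 ≤ ((addPath3 T u).neighborSet (inr 1) ∩ S').ncard ∧
          ((addPath3 T u).neighborSet (inr 1) ∩ S').ncard ≤ 2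
        have key : (addPath3 T u).neighborSet (inr 1) ∩ S' = {inr 2} := by
          ext z
          simp only [Set.mem_inter_iff, mem_neighborSet, addPath3_adj, hS', Set.mem_union,
            Set.mem_image, Set.mem_insert_iff, Set.mem_singleton_iff]
          constructor
          · rintro ⟨⟨a',b,h,ha,rfl⟩|⟨ha,rfl⟩|⟨h,rfl⟩|⟨h,rfl⟩|⟨h,rfl⟩|⟨h,rfl⟩|⟨h,_⟩, hz⟩ <;> simp_all
          · rintro rfl
            exact ⟨by tauto, by tauto⟩
        rw [key, Set.ncard_singleton]; omega
      · show 1 ≤ ((addPath3 T u).neighborSet (inr 2) ∩ S').ncard ∧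
          ((addPath3 T u).neighborSet (inr 2) ∩ S').ncard ≤ 2
        have key : (addPath3 T u).neighborSet (inr 2) ∩ S' = {inr 1} := by
          ext z
          simp only [Set.mem_inter_iff, mem_neighborSet, addPath3_adj, hS', Set.mem_union,
            Set.mem_image, Set.mem_insert_iff, Set.mem_singleton_iff]
          constructor
          · rintro ⟨⟨a',b,h,ha,rfl⟩|⟨ha,rfl⟩|⟨h,rfl⟩|⟨h,rfl⟩|⟨h,rfl⟩|⟨h,rfl⟩|⟨h,rfl⟩, hz⟩ <;> simp_all
          · rintro rfl
            exact ⟨by tauto, by tauto⟩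
        rw [key, Set.ncard_singleton]; omega
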